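/- Let 0 < r < 1 and set p_r := 2r / log₂(2 + 2^r). Then for all real x ≥ 0, one has (1 + (2x)^r + x^{2r})^{1/r} ≥ (1 + x^{p_r})^{2/p_r}. -/

import Mathlib

open Real Set


-- AM-GM lemma W
lemma lemW {q t : ℝ} (hq1 : 1 < q) (hq2 : q < 2) (ht : 0 < t) :
    q^2 * t ^ (2-q) ≤ (2-q)*(3*q-2) * t ^ q + 2*q*(q-1) := by
  have hq0 : (0:ℝ) < q := by linarith
  set θ : ℝ := (2-q)/q with hθ
  have hθ0 : 0 ≤ θ := div_nonneg (by linarith) hq0.le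
  have hθ1 : θ ≤ 1 := by rw [hθ, div_le_one hq0]; linarith
  have htq : (0:ℝ) ≤ t ^ q := (rpow_pos_of_pos ht q).le
  have hp1 : (0:ℝ) ≤ q*(3*q-2)*t^q := mul_nonneg (by nlinarith) htq
  have h1 : (q*(3*q-2)*t^q) ^ θ * ((q^2:ℝ)) ^ (1-θ) ≤ θ*(q*(3*q-2)*t^q) + (1-θ)*(q^2) :=
    Real.geom_mean_le_arith_mean2_weighted hθ0 (by linarith) hp1 (by positivity) (by ring)
  have hqθ : q*θ = 2-q := by rw [hθ]; field_simp
  have e1 : t ^ (2-q) = (t^q) ^ θ := by rw [← hqθ, Real.rpow_mul ht.le]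
  have e2 : (q^2:ℝ) = (q^2:ℝ)^θ * (q^2:ℝ)^(1-θ) := by
    rw [← Real.rpow_add (by positivity)]
    norm_num
  have h2 : q^2 * t ^ (2-q) ≤ (q*(3*q-2)*t^q) ^ θ * ((q^2:ℝ)) ^ (1-θ) := by
    have step : q^2 * t ^ (2-q) = ((q^2:ℝ)*t^q)^θ * ((q^2:ℝ))^(1-θ) := by
      rw [e1, Real.mul_rpow (by positivity) htq]
      conv_lhs => rw [e2]
      ring
    rw [step]
    have hle : (q^2:ℝ)*t^q ≤ q*(3*q-2)*t^q := by
      have h' : (0:ℝ) ≤ (2*q^2-2*q)*t^q := mul_nonneg (by nlinarith) htq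
      nlinarith
    exact mul_le_mul_of_nonneg_right
      (Real.rpow_le_rpow (by positivity) hle hθ0)
      (Real.rpow_nonneg (by positivity) _)
  calc q^2 * t^(2-q) ≤ _ := h2
    _ ≤ θ*(q*(3*q-2)*t^q) + (1-θ)*(q^2) := h1
    _ = (2-q)*(3*q-2) * t ^ q + 2*q*(q-1) := by rw [hθ]; field_simp; ring

noncomputable def Ef (q t : ℝ) : ℝ := (2-q)*(1-t^(3*q-2)) - q*t^(2*q-2) + q*t^q

lemma hasDerivAt_Ef {q t : ℝ} (hq1 : 1 < q) (ht : 0 < t) :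
    HasDerivAt (Ef q)
      (-((2-q)*((3*q-2)*t^(3*q-2-1))) - q*((2*q-2)*t^(2*q-2-1)) + q*(q*t^(q-1))) t := by
  have h1 : HasDerivAt (fun s : ℝ => s ^ (3*q-2)) ((3*q-2)*t^(3*q-2-1)) t :=
    Real.hasDerivAt_rpow_const (Or.inl ht.ne')
  have h2 : HasDerivAt (fun s : ℝ => s ^ (2*q-2)) ((2*q-2)*t^(2*q-2-1)) t :=
    Real.hasDerivAt_rpow_const (Or.inl ht.ne')
  have h3 : HasDerivAt (fun s : ℝ => s ^ q) (q*t^(q-1)) t :=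
    Real.hasDerivAt_rpow_const (Or.inl ht.ne')
  have := (((h1.const_sub 1).const_mul (2-q)).sub (h2.const_mul q)).add (h3.const_mul q)
  exact this.congr_deriv (by ring)

lemma Ef_nonneg {q t : ℝ} (hq1 : 1 < q) (hq2 : q < 2) (ht : 0 < t) (ht1 : t ≤ 1) :
    0 ≤ Ef q t := by
  have hE1 : Ef q 1 = 0 := by simp [Ef]
  have hanti : AntitoneOn (Ef q) (Icc t 1) := by
    apply antitoneOn_of_deriv_nonpos (convex_Icc t 1)
    · intro s hs
      exact ((hasDerivAt_Ef hq1 (lt_of_lt_of_le ht hs.1)).continuousAt).continuousWithinAt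
    · intro s hs
      rw [interior_Icc] at hs
      exact ((hasDerivAt_Ef hq1 (lt_trans ht hs.1)).differentiableAt).differentiableWithinAt
    · intro s hs
      rw [interior_Icc] at hs
      have hs0 : 0 < s := lt_trans ht hs.1
      have hs1 : s ≤ 1 := hs.2.le
      rw [(hasDerivAt_Ef hq1 hs0).deriv]
      -- use lemW multiplied by s^(2q-3)
      have hW := lemW hq1 hq2 hs0
      have hmul := mul_le_mul_of_nonneg_right hW (rpow_pos_of_pos hs0 (2*q-3)).le
      have e1 : s^(2-q) * s^(2*q-3) = s^(q-1) := by
        rw [← Real.rpow_add hs0]; ring_nf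
      have e2 : s^q * s^(2*q-3) = s^(3*q-3) := by
        rw [← Real.rpow_add hs0]; ring_nf
      have e3 : s^(3*q-2-1) = s^(3*q-3) := by ring_nf
      have e4 : s^(2*q-2-1) = s^(2*q-3) := by ring_nf
      rw [e3, e4]
      nlinarith [hmul, e1, e2]
  have := hanti (left_mem_Icc.mpr ht1) (right_mem_Icc.mpr ht1) ht1
  rw [hE1] at this
  exact this
noncomputable def Gf (q t : ℝ) : ℝ := t^(2-q)*(1+t^q)^(2-2/q) - t^q - (q-1)

lemma hasDerivAt_Gf {q t : ℝ} (hq1 : 1 < q) (ht : 0 < t) :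
    HasDerivAt (Gf q)
      (((2-q)*t^(2-q-1))*(1+t^q)^(2-2/q)
        + t^(2-q)*((q*t^(q-1))*(2-2/q)*(1+t^q)^(2-2/q-1))
        - q*t^(q-1)) t := by
  have hb : (0:ℝ) < 1 + t^q := by positivity
  have h3 : HasDerivAt (fun s : ℝ => s ^ q) (q*t^(q-1)) t :=
    Real.hasDerivAt_rpow_const (Or.inl ht.ne')
  have h1 : HasDerivAt (fun s : ℝ => s ^ (2-q)) ((2-q)*t^(2-q-1)) t :=
    Real.hasDerivAt_rpow_const (Or.inl ht.ne')
  have h2 : HasDerivAt (fun s : ℝ => (1+s^q) ^ (2-2/q)) ((q*t^(q-1))*(2-2/q)*(1+t^q)^(2-2/q-1)) t :=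
    (h3.const_add 1).rpow_const (Or.inl hb.ne')
  exact ((h1.mul h2).sub h3).sub_const (q-1)

lemma Gf_deriv_nonneg {q t : ℝ} (hq1 : 1 < q) (hq2 : q < 2) (ht : 0 < t) (ht1 : t ≤ 1) :
    0 ≤ ((2-q)*t^(2-q-1))*(1+t^q)^(2-2/q)
        + t^(2-q)*((q*t^(q-1))*(2-2/q)*(1+t^q)^(2-2/q-1))
        - q*t^(q-1) := by
  have hq0 : (0:ℝ) < q := by linarith
  have ha : (0:ℝ) < t^q := rpow_pos_of_pos ht q
  have hb : (0:ℝ) < 1 + t^q := by positivity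
  have hber : (1+t^q)^(2/q-1) ≤ 1 + (2/q-1)*t^q := by
    have h1 : (0:ℝ) ≤ 2/q - 1 := by
      rw [sub_nonneg, le_div_iff₀ hq0]; linarith
    have h2 : 2/q - 1 ≤ 1 := by
      rw [sub_le_iff_le_add, div_le_iff₀ hq0]; linarith
    exact rpow_one_add_le_one_add_mul_self (by linarith : (-1:ℝ) ≤ t^q) h1 h2
  have hE := Ef_nonneg hq1 hq2 ht ht1
  rw [Ef] at hE
  have ht2q : (0:ℝ) < t^(2*q-2) := rpow_pos_of_pos ht _
  have key : q * t^(2*q-2) * (1+t^q)^(2/q-1) ≤ 2-q+q*t^q := by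
    have step1 : q * t^(2*q-2) * (1+t^q)^(2/q-1) ≤ q * t^(2*q-2) * (1 + (2/q-1)*t^q) :=
      mul_le_mul_of_nonneg_left hber (by positivity)
    have e1 : t^(2*q-2) * t^q = t^(3*q-2) := by rw [← Real.rpow_add ht]; ring_nf
    have e2 : q * (2/q-1) = 2 - q := by field_simp
    have step2 : q * t^(2*q-2) * (1 + (2/q-1)*t^q) = q*t^(2*q-2) + (2-q)*t^(3*q-2) := by
      have h : q * t^(2*q-2) * (1 + (2/q-1)*t^q)
          = q*t^(2*q-2) + (q*(2/q-1))*(t^(2*q-2)*t^q) := by ring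
      rw [h, e1, e2]
    rw [step2] at step1
    linarith
  have hP : (0:ℝ) < t^(1-q)*(1+t^q)^(1-2/q) :=
    mul_pos (rpow_pos_of_pos ht _) (rpow_pos_of_pos hb _)
  have hmul := mul_le_mul_of_nonneg_right key hP.le
  have eL : q * t^(2*q-2) * (1+t^q)^(2/q-1) * (t^(1-q)*(1+t^q)^(1-2/q)) = q * t^(q-1) := by
    have e1 : t^(2*q-2) * t^(1-q) = t^(q-1) := by rw [← Real.rpow_add ht]; ring_nf
    have e2 : (1+t^q)^(2/q-1) * (1+t^q)^(1-2/q) = 1 := by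
      rw [← Real.rpow_add hb]; norm_num
    calc q * t^(2*q-2) * (1+t^q)^(2/q-1) * (t^(1-q)*(1+t^q)^(1-2/q))
        = q * (t^(2*q-2) * t^(1-q)) * ((1+t^q)^(2/q-1) * (1+t^q)^(1-2/q)) := by ring
      _ = q * t^(q-1) := by rw [e1, e2]; ring
  have eR : (2-q+q*t^q) * (t^(1-q)*(1+t^q)^(1-2/q))
      = ((2-q)*t^(2-q-1))*(1+t^q)^(2-2/q)
        + t^(2-q)*((q*t^(q-1))*(2-2/q)*(1+t^q)^(2-2/q-1)) := by
    have e3 : (1+t^q)^(2-2/q) = (1+t^q)^(1-2/q) * (1+t^q) := by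
      rw [← Real.rpow_add_one hb.ne']; ring_nf
    have e4 : t^(2-q-1) = t^(1-q) := by ring_nf
    have e5 : (1+t^q)^(2-2/q-1) = (1+t^q)^(1-2/q) := by ring_nf
    have e6 : t^(2-q) * t^(q-1) = t := by rw [← Real.rpow_add ht]; norm_num
    have e7 : t^q * t^(1-q) = t := by rw [← Real.rpow_add ht]; norm_num
    have h9 : q*(2-2/q) = 2*q-2 := by field_simp
    rw [e3, e4, e5]
    linear_combination ((2*q-2)*(1+t^q)^(1-2/q))*e7 - ((2*q-2)*(1+t^q)^(1-2/q))*e6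
      - (t^(2-q)*t^(q-1)*(1+t^q)^(1-2/q))*h9
  rw [eL, eR] at hmul
  linarith
lemma Gf_mono {q t₁ t₂ : ℝ} (hq1 : 1 < q) (hq2 : q < 2) (h0 : 0 < t₁) (h12 : t₁ ≤ t₂)
    (h21 : t₂ ≤ 1) : Gf q t₁ ≤ Gf q t₂ := by
  have hmono : MonotoneOn (Gf q) (Icc t₁ t₂) := by
    apply monotoneOn_of_deriv_nonneg (convex_Icc t₁ t₂)
    · intro s hs
      exact ((hasDerivAt_Gf hq1 (lt_of_lt_of_le h0 hs.1)).continuousAt).continuousWithinAt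
    · intro s hs
      rw [interior_Icc] at hs
      exact ((hasDerivAt_Gf hq1 (lt_trans h0 hs.1)).differentiableAt).differentiableWithinAt
    · intro s hs
      rw [interior_Icc] at hs
      have hs0 : 0 < s := lt_trans h0 hs.1
      rw [(hasDerivAt_Gf hq1 hs0).deriv]
      exact Gf_deriv_nonneg hq1 hq2 hs0 (le_of_lt (lt_of_lt_of_le hs.2 h21))
  exact hmono (left_mem_Icc.mpr h12) (right_mem_Icc.mpr h12) h12

noncomputable def fn (q c t : ℝ) : ℝ := 1 + c*t + t^2 - (1+t^q)^(2/q)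
noncomputable def fn1 (q c t : ℝ) : ℝ := c + 2*t - 2*(t^(q-1)*(1+t^q)^(2/q-1))

lemma hasDerivAt_fn {q c t : ℝ} (hq1 : 1 < q) (hq2 : q < 2) (ht : 0 ≤ t) :
    HasDerivAt (fn q c) (fn1 q c t) t := by
  have hq0 : (0:ℝ) < q := by linarith
  have hb : (0:ℝ) < 1 + t^q := by positivity
  have h3 : HasDerivAt (fun s : ℝ => s ^ q) (q*t^(q-1)) t :=
    Real.hasDerivAt_rpow_const (Or.inr hq1.le)
  have h2q : (1:ℝ) ≤ 2/q := by rw [le_div_iff₀ hq0]; linarith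
  have h4 : HasDerivAt (fun s : ℝ => (1+s^q) ^ (2/q)) ((q*t^(q-1))*(2/q)*(1+t^q)^(2/q-1)) t :=
    (h3.const_add 1).rpow_const (Or.inr h2q)
  have h5 : HasDerivAt (fun s : ℝ => 1 + c*s + s^2) (c + 2*t) t := by
    have := ((hasDerivAt_id t).const_mul c).const_add 1 |>.add (hasDerivAt_pow 2 t)
    exact this.congr_deriv (by norm_num)
  have := h5.sub h4
  refine this.congr_deriv (Eq.symm ?_)
  rw [fn1]
  have h6 : q*t^(q-1)*(2/q)*(1+t^q)^(2/q-1) = 2*(t^(q-1)*(1+t^q)^(2/q-1)) := by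
    field_simp
  rw [h6]

lemma hasDerivAt_fn1 {q c t : ℝ} (hq1 : 1 < q) (hq2 : q < 2) (ht : 0 < t) :
    HasDerivAt (fn1 q c) (2*(t^(q-2)*(1+t^q)^(2/q-2))*Gf q t) t := by
  have hq0 : (0:ℝ) < q := by linarith
  have hb : (0:ℝ) < 1 + t^q := by positivity
  have h3 : HasDerivAt (fun s : ℝ => s ^ q) (q*t^(q-1)) t :=
    Real.hasDerivAt_rpow_const (Or.inl ht.ne')
  have h1 : HasDerivAt (fun s : ℝ => s ^ (q-1)) ((q-1)*t^(q-1-1)) t :=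
    Real.hasDerivAt_rpow_const (Or.inl ht.ne')
  have h2 : HasDerivAt (fun s : ℝ => (1+s^q) ^ (2/q-1))
      ((q*t^(q-1))*(2/q-1)*(1+t^q)^(2/q-1-1)) t :=
    (h3.const_add 1).rpow_const (Or.inl hb.ne')
  have h5 : HasDerivAt (fun s : ℝ => c + 2*s) (2:ℝ) t := by
    have := ((hasDerivAt_id t).const_mul 2).const_add c
    exact this.congr_deriv (by ring)
  have hD := h5.sub (((h1.mul h2)).const_mul 2)
  refine hD.congr_deriv (Eq.symm ?_)
  rw [Gf]
  have g4 : t^(q-1)*t^(q-1) = t^(q-2)*t^q := by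
    rw [← Real.rpow_add ht, ← Real.rpow_add ht]; ring_nf
  have g5 : q*(2/q-1) = 2-q := by field_simp
  have g6 : t^(q-2)*t^(2-q) = 1 := by
    rw [← Real.rpow_add ht]; norm_num
  have g7 : (1+t^q)^(2/q-2)*(1+t^q)^(2-2/q) = 1 := by
    rw [← Real.rpow_add hb]; norm_num
  have g1 : t^(q-1-1) = t^(q-2) := by ring_nf
  have g2 : (1+t^q)^(2/q-1-1) = (1+t^q)^(2/q-2) := by ring_nf
  have g3 : (1+t^q)^(2/q-1) = (1+t^q)^(2/q-2)*(1+t^q) := by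
    rw [← Real.rpow_add_one hb.ne']; ring_nf
  rw [g1, g2, g3]
  linear_combination (2*(1+t^q)^(2/q-2)*q*(2/q-1))*g4 + (2*t^(q-2)*t^q*(1+t^q)^(2/q-2))*g5
    + (2*(1+t^q)^(2/q-2)*(1+t^q)^(2-2/q))*g6 + (2:ℝ)*g7
lemma key01 {q t : ℝ} (hq1 : 1 < q) (hq2 : q < 2) (ht0 : 0 ≤ t) (ht1 : t ≤ 1) :
    0 ≤ fn q ((2:ℝ)^(2/q)-2) t := by
  have hq0 : (0:ℝ) < q := by linarith
  set c : ℝ := (2:ℝ)^(2/q) - 2 with hc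
  -- values at 0 and 1
  have htwo : ((1:ℝ)+1) = 2 := by norm_num
  have hfn_one : fn q c 1 = 0 := by
    rw [fn, Real.one_rpow, htwo, hc]; ring
  have hfn1_one : fn1 q c 1 = 0 := by
    rw [fn1]
    simp only [Real.one_rpow]
    rw [htwo, hc]
    have h : (2:ℝ)^(2/q-1) = 2^(2/q)/2 := by
      rw [Real.rpow_sub (by norm_num : (0:ℝ) < 2), Real.rpow_one]
    rw [h]; ring
  have hfn_zero : fn q c 0 = 0 := by
    rw [fn, Real.zero_rpow hq0.ne', add_zero, Real.one_rpow]; ring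
  -- the witness point t₀ with Gf q t₀ < 0
  set t₀ : ℝ := ((q-1)/2)^((1:ℝ)/(2-q)) with ht₀
  have hq12 : (0:ℝ) < (q-1)/2 := by linarith
  have ht₀pos : 0 < t₀ := Real.rpow_pos_of_pos hq12 _
  have ht₀le1 : t₀ ≤ 1 :=
    Real.rpow_le_one hq12.le (by linarith) (div_nonneg zero_le_one (by linarith))
  have hGt₀ : Gf q t₀ < 0 := by
    have h2qne : (2:ℝ)-q ≠ 0 := by linarith
    have e1 : t₀^(2-q) = (q-1)/2 := by
      rw [ht₀, ← Real.rpow_mul hq12.le]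
      rw [show (1:ℝ)/(2-q)*(2-q) = 1 by field_simp]
      exact Real.rpow_one _
    have ht₀q : (0:ℝ) < t₀^q := Real.rpow_pos_of_pos ht₀pos q
    have ht₀q1 : t₀^q ≤ 1 := Real.rpow_le_one ht₀pos.le ht₀le1 hq0.le
    have e2 : (1+t₀^q)^(2-2/q) ≤ 2 := by
      calc (1+t₀^q)^(2-2/q) ≤ 2^(2-2/q) := by
            apply Real.rpow_le_rpow (by positivity) (by linarith)
            rw [sub_nonneg, div_le_iff₀ hq0]; nlinarith
        _ ≤ (2:ℝ)^(1:ℝ) := by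
            apply Real.rpow_le_rpow_of_exponent_le (by norm_num)
            have h1q : (1:ℝ) ≤ 2/q := by rw [le_div_iff₀ hq0]; linarith
            linarith
        _ = 2 := Real.rpow_one 2
    have e3 : t₀^(2-q)*(1+t₀^q)^(2-2/q) ≤ (q-1) := by
      rw [e1]
      have hnn : (0:ℝ) ≤ (q-1)/2 := hq12.le
      calc (q-1)/2*(1+t₀^q)^(2-2/q) ≤ (q-1)/2*2 := mul_le_mul_of_nonneg_left e2 hnn
        _ = q-1 := by ring
    rw [Gf]
    linarith
  -- the set S and its sup
  set S : Set ℝ := {s : ℝ | (0 < s ∧ s ≤ 1) ∧ Gf q s ≤ 0} with hS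
  have ht₀S : t₀ ∈ S := ⟨⟨ht₀pos, ht₀le1⟩, hGt₀.le⟩
  have hSne : S.Nonempty := ⟨t₀, ht₀S⟩
  have hSbdd : BddAbove S := ⟨1, fun s hs => hs.1.2⟩
  set T : ℝ := sSup S with hT
  have hTt₀ : t₀ ≤ T := le_csSup hSbdd ht₀S
  have hTpos : 0 < T := lt_of_lt_of_le ht₀pos hTt₀
  have hT1 : T ≤ 1 := csSup_le hSne fun s hs => hs.1.2
  have hGneg : ∀ s, 0 < s → s < T → Gf q s ≤ 0 := by
    intro s hs hsT
    obtain ⟨u, huS, hsu⟩ := exists_lt_of_lt_csSup hSne hsT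
    exact le_trans (Gf_mono hq1 hq2 hs hsu.le huS.1.2) huS.2
  have hGpos : ∀ s, T < s → s ≤ 1 → 0 ≤ Gf q s := by
    intro s hsT hs1
    by_contra h
    push_neg at h
    have : s ∈ S := ⟨⟨lt_trans hTpos hsT, hs1⟩, h.le⟩
    exact absurd (le_csSup hSbdd this) (not_le.mpr hsT)
  -- Part 1: fn ≥ 0 on [T,1]
  have hfn1_mono : MonotoneOn (fn1 q c) (Icc T 1) := by
    apply monotoneOn_of_deriv_nonneg (convex_Icc T 1)
    · intro s hs
      exact (hasDerivAt_fn1 hq1 hq2 (lt_of_lt_of_le hTpos hs.1)).continuousAt.continuousWithinAt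
    · intro s hs
      rw [interior_Icc] at hs
      exact (hasDerivAt_fn1 hq1 hq2 (lt_trans hTpos hs.1)).differentiableAt.differentiableWithinAt
    · intro s hs
      rw [interior_Icc] at hs
      have hs0 : 0 < s := lt_trans hTpos hs.1
      rw [(hasDerivAt_fn1 hq1 hq2 hs0).deriv]
      have hG := hGpos s hs.1 hs.2.le
      have hb : (0:ℝ) < 1 + s^q := by positivity
      have : (0:ℝ) ≤ 2*(s^(q-2)*(1+s^q)^(2/q-2)) := by positivity
      exact mul_nonneg this hG
  have hfn1_nonpos : ∀ s, T ≤ s → s ≤ 1 → fn1 q c s ≤ 0 := by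
    intro s hTs hs1
    have := hfn1_mono (mem_Icc.mpr ⟨hTs, hs1⟩) (right_mem_Icc.mpr (le_trans hTs hs1)) hs1
    rwa [hfn1_one] at this
  have hPart1 : ∀ s, T ≤ s → s ≤ 1 → 0 ≤ fn q c s := by
    intro s hTs hs1
    have hanti : AntitoneOn (fn q c) (Icc T 1) := by
      apply antitoneOn_of_deriv_nonpos (convex_Icc T 1)
      · intro y hy
        exact (hasDerivAt_fn hq1 hq2 (le_of_lt (lt_of_lt_of_le hTpos hy.1))).continuousAt.continuousWithinAt
      · intro y hy
        rw [interior_Icc] at hy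
        exact (hasDerivAt_fn hq1 hq2 (le_of_lt (lt_trans hTpos hy.1))).differentiableAt.differentiableWithinAt
      · intro y hy
        rw [interior_Icc] at hy
        rw [(hasDerivAt_fn hq1 hq2 (le_of_lt (lt_trans hTpos hy.1))).deriv]
        exact hfn1_nonpos y hy.1.le hy.2.le
    have := hanti (mem_Icc.mpr ⟨hTs, hs1⟩) (right_mem_Icc.mpr (le_trans hTs hs1)) hs1
    rw [hfn_one] at this
    exact this
  -- helper: fn1 is antitone below T
  have hfn1_anti : ∀ y z, 0 < y → y ≤ z → z < T → fn1 q c z ≤ fn1 q c y := by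
    intro y z hy hyz hzT
    have hanti : AntitoneOn (fn1 q c) (Icc y z) := by
      apply antitoneOn_of_deriv_nonpos (convex_Icc y z)
      · intro s hs
        exact (hasDerivAt_fn1 hq1 hq2 (lt_of_lt_of_le hy hs.1)).continuousAt.continuousWithinAt
      · intro s hs
        rw [interior_Icc] at hs
        exact (hasDerivAt_fn1 hq1 hq2 (lt_trans hy hs.1)).differentiableAt.differentiableWithinAt
      · intro s hs
        rw [interior_Icc] at hs
        have hs0 : 0 < s := lt_trans hy hs.1
        rw [(hasDerivAt_fn1 hq1 hq2 hs0).deriv]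
        have hG := hGneg s hs0 (lt_trans hs.2 hzT)
        have hb : (0:ℝ) < 1 + s^q := by positivity
        have hpos : (0:ℝ) ≤ 2*(s^(q-2)*(1+s^q)^(2/q-2)) := by positivity
        exact mul_nonpos_of_nonneg_of_nonpos hpos hG
    exact hanti (left_mem_Icc.mpr hyz) (right_mem_Icc.mpr hyz) hyz
  -- combine
  rcases le_or_gt T t with hTt | htT
  · exact hPart1 t hTt ht1
  · -- t < T
    rcases eq_or_lt_of_le ht0 with h0t | h0t
    · rw [← h0t, hfn_zero]
    by_cases hsign : 0 ≤ fn1 q c t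
    · -- fn monotone on [0, t]
      have hmono : MonotoneOn (fn q c) (Icc 0 t) := by
        apply monotoneOn_of_deriv_nonneg (convex_Icc 0 t)
        · intro y hy
          exact (hasDerivAt_fn hq1 hq2 hy.1).continuousAt.continuousWithinAt
        · intro y hy
          rw [interior_Icc] at hy
          exact (hasDerivAt_fn hq1 hq2 hy.1.le).differentiableAt.differentiableWithinAt
        · intro y hy
          rw [interior_Icc] at hy
          rw [(hasDerivAt_fn hq1 hq2 hy.1.le).deriv]
          exact le_trans hsign (hfn1_anti y t hy.1 hy.2.le htT)
      have := hmono (left_mem_Icc.mpr ht0) (right_mem_Icc.mpr ht0) ht0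
      rwa [hfn_zero] at this
    · push_neg at hsign
      -- fn antitone on [t, T]
      have hanti : AntitoneOn (fn q c) (Icc t T) := by
        apply antitoneOn_of_deriv_nonpos (convex_Icc t T)
        · intro y hy
          exact (hasDerivAt_fn hq1 hq2 (le_trans ht0 hy.1)).continuousAt.continuousWithinAt
        · intro y hy
          rw [interior_Icc] at hy
          exact (hasDerivAt_fn hq1 hq2 (le_of_lt (lt_of_le_of_lt ht0 hy.1))).differentiableAt.differentiableWithinAt
        · intro y hy
          rw [interior_Icc] at hy
          rw [(hasDerivAt_fn hq1 hq2 (le_of_lt (lt_of_le_of_lt ht0 hy.1))).deriv]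
          exact le_trans (hfn1_anti t y h0t hy.1.le hy.2) hsign.le
      have h1 := hanti (left_mem_Icc.mpr htT.le) (right_mem_Icc.mpr htT.le) htT.le
      exact le_trans (hPart1 T le_rfl hT1) h1
lemma keyAll {q t c : ℝ} (hq1 : 1 < q) (hq2 : q < 2) (hc : c = (2:ℝ)^(2/q)-2) (ht : 0 ≤ t) :
    (1+t^q)^(2/q) ≤ 1 + c*t + t^2 := by
  subst hc
  have hq0 : (0:ℝ) < q := by linarith
  rcases le_or_gt t 1 with h1 | h1
  · have h := key01 hq1 hq2 ht h1
    rw [fn] at h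
    linarith
  · have ht0 : 0 < t := by linarith
    set s := t⁻¹ with hs
    have hs0 : 0 < s := by positivity
    have hs1 : s ≤ 1 := by
      rw [hs]
      exact inv_le_one_of_one_le₀ h1.le
    have hkey := key01 hq1 hq2 hs0.le hs1
    rw [fn] at hkey
    have hts : t * s = 1 := mul_inv_cancel₀ ht0.ne'
    have hB : t^q * s^q = 1 := by
      rw [← Real.mul_rpow ht hs0.le, hts, Real.one_rpow]
    have htq : (0:ℝ) < t^q := Real.rpow_pos_of_pos ht0 q
    have hA : (t:ℝ)^2 * (1+s^q)^(2/q) = (1+t^q)^(2/q) := by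
      have h2 : (t:ℝ)^2 = (t^q)^(2/q) := by
        rw [← Real.rpow_mul ht, show q*(2/q) = (2:ℝ) by field_simp]
        rw [show (2:ℝ) = ((2:ℕ):ℝ) by norm_num, Real.rpow_natCast]
      rw [h2, ← Real.mul_rpow htq.le (by positivity)]
      congr 1
      rw [mul_add, mul_one, hB]
      ring
    have hmul := mul_le_mul_of_nonneg_left
      (by linarith : (1+s^q)^(2/q) ≤ 1 + ((2:ℝ)^(2/q)-2)*s + s^2)
      (by positivity : (0:ℝ) ≤ (t:ℝ)^2)
    rw [hA] at hmul
    have hC : (t:ℝ)^2 * (1 + ((2:ℝ)^(2/q)-2)*s + s^2) = 1 + ((2:ℝ)^(2/q)-2)*t + t^2 := by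
      rw [hs]
      field_simp
      ring
    rw [hC] at hmul
    exact hmul

theorem numerical_diagonal_inequality_reverse (r : ℝ) (hr0 : 0 < r) (hr1 : r < 1)
    (x : ℝ) (hx : 0 ≤ x) :
    (1 + x ^ (2 * r / Real.logb 2 (2 + 2 ^ r))) ^
        (2 / (2 * r / Real.logb 2 (2 + 2 ^ r))) ≤
      (1 + (2 * x) ^ r + x ^ (2 * r)) ^ (1 / r) := by
  have h2r1 : (1:ℝ) < (2:ℝ)^r := by
    have := Real.rpow_lt_rpow_left_iff (x := 2) (y := 0) (z := r) one_lt_two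
    rw [Real.rpow_zero] at this
    exact this.mpr hr0
  have h2r2 : (2:ℝ)^r < 2 := by
    have := Real.rpow_lt_rpow_left_iff (x := 2) (y := r) (z := 1) one_lt_two
    rw [Real.rpow_one] at this
    exact this.mpr hr1
  set L : ℝ := Real.logb 2 (2 + 2^r) with hL
  have hbase : (0:ℝ) < 2 + 2^r := by linarith
  have h4 : (2:ℝ)^(2:ℝ) = 4 := by
    rw [show (2:ℝ) = ((2:ℕ):ℝ) by norm_num]
    rw [Real.rpow_natCast]
    norm_num
  have hL1 : 1 < L := by
    rw [hL]
    apply (Real.lt_logb_iff_rpow_lt one_lt_two hbase).mpr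
    rw [Real.rpow_one]
    linarith
  have hL2 : L < 2 := by
    rw [hL]
    apply (Real.logb_lt_iff_lt_rpow one_lt_two hbase).mpr
    rw [h4]
    linarith
  have hL0 : (0:ℝ) < L := by linarith
  set q : ℝ := 2 / L with hq
  have hq1 : 1 < q := by
    rw [hq, lt_div_iff₀ hL0]; linarith
  have hq2 : q < 2 := by
    rw [hq, div_lt_iff₀ hL0]; nlinarith
  have h2q : 2/q = L := by
    rw [hq]; field_simp
  have hcq : (2:ℝ)^(2/q) - 2 = 2^r := by
    rw [h2q, hL, Real.rpow_logb (by norm_num) (by norm_num) hbase]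
    ring
  set t : ℝ := x ^ r with htdef
  have ht0 : 0 ≤ t := Real.rpow_nonneg hx r
  have hkey := keyAll hq1 hq2 rfl ht0
  rw [hcq] at hkey
  -- convert t^q to x^p
  have hp : t ^ q = x ^ (2*r/L) := by
    rw [htdef, ← Real.rpow_mul hx]
    congr 1
    rw [hq]
    ring
  rw [hp, h2q] at hkey
  -- hkey : (1 + x^(2r/L))^L ≤ 1 + 2^r*t + t^2
  have hbpos : (0:ℝ) ≤ (1 + x ^ (2*r/L)) ^ L := by positivity
  have hr' : (0:ℝ) ≤ 1/r := by positivity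
  have hfinal := Real.rpow_le_rpow hbpos hkey hr'
  have hLHS : ((1 + x ^ (2*r/L)) ^ L) ^ (1/r) = (1 + x ^ (2*r/L)) ^ (2/(2*r/L)) := by
    rw [← Real.rpow_mul (by positivity)]
    congr 1
    field_simp
  have hRHS : 1 + (2:ℝ)^r*t + t^2 = 1 + (2*x)^r + x^(2*r) := by
    rw [htdef, ← Real.mul_rpow (by norm_num : (0:ℝ) ≤ 2) hx]
    congr 1
    rw [← Real.rpow_natCast (x ^ r) 2, ← Real.rpow_mul hx]
    norm_num
    ring_nf
  rw [hLHS, hRHS] at hfinal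
  exact hfinal
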